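/- Let G be a labeled simple graph and let G̃ be obtained by adding two new adjacent vertices v, w with identical neighborhoods N ⊆ V(G), both with framing 1. Then for every state s ⊆ V(G): corank A(G̃(s)) = corank A(G(s)), corank A(G̃(s ∪ {v})) = corank A(G̃(s ∪ {w})), and corank A(G̃(s ∪ {v,w})) = corank A(G̃(s ∪ {v})) + 1. -/
import Mathlib


open Matrix

/-- The framed adjacency matrix of the graph `G̃` obtained from a graph with framed
adjacency matrix `A` by adding two new vertices `v` (index `Sum.inl false`) and `w`
(index `Sum.inl true`) with the same neighbourhood, indicated by the vector `a`,
with the `2×2` corner block constant equal to `d` (so `d = 0` means framing `0`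
and `v, w` non-adjacent; `d = 1` means framing `1` and `v, w` adjacent). -/
def ext2 {n : ℕ} (A : Matrix (Fin n) (Fin n) (ZMod 2)) (a : Fin n → ZMod 2)
    (d : ZMod 2) : Matrix (Bool ⊕ Fin n) (Bool ⊕ Fin n) (ZMod 2) :=
  Matrix.of fun i j =>
    match i, j with
    | Sum.inl _, Sum.inl _ => d
    | Sum.inl _, Sum.inr j => a j
    | Sum.inr i, Sum.inl _ => a i
    | Sum.inr i, Sum.inr j => A i j

/-- Corank (size minus rank) as an integer, for a matrix indexed by a finite type. -/
noncomputable def corankZ {m : Type*} [Fintype m] (M : Matrix m m (ZMod 2)) : ℤ :=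
  (Fintype.card m : ℤ) - M.rank

lemma rank_submatrix_le' {K : Type*} [Field K] {m l : Type*} [Fintype m] [Fintype l]
    [DecidableEq m] (M : Matrix m m K) (f g : l → m) :
    (M.submatrix f g).rank ≤ M.rank := by
  have h1 : M.submatrix f g =
      ((1 : Matrix m m K).submatrix f id) * (M * (1 : Matrix m m K).submatrix id g) := by
    ext i j
    simp [Matrix.mul_apply, Matrix.one_apply, Finset.sum_ite_eq, Finset.sum_ite_eq',
      mul_ite, ite_mul]
  rw [h1]
  exact le_trans (Matrix.rank_mul_le_right _ _) (Matrix.rank_mul_le_left _ _)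

theorem stmt13 {n : ℕ} (A : Matrix (Fin n) (Fin n) (ZMod 2)) (hA : A.IsSymm)
    (a : Fin n → ZMod 2) (s : Finset (Fin n)) :
    -- corank A(G̃(s)) = corank A(G(s))
    corankZ ((ext2 A a (1 : ZMod 2)).submatrix
        (fun i : {x // x ∈ s} => Sum.inr i.val) (fun i : {x // x ∈ s} => Sum.inr i.val))
      = corankZ (A.submatrix (fun i : {x // x ∈ s} => i.val) (fun i : {x // x ∈ s} => i.val)) ∧
    -- corank A(G̃(s ∪ {v})) = corank A(G̃(s ∪ {w}))
    corankZ ((ext2 A a (1 : ZMod 2)).submatrix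
        (Sum.elim (fun _ : Unit => Sum.inl false) (fun i : {x // x ∈ s} => Sum.inr i.val))
        (Sum.elim (fun _ : Unit => Sum.inl false) (fun i : {x // x ∈ s} => Sum.inr i.val)))
      = corankZ ((ext2 A a (1 : ZMod 2)).submatrix
        (Sum.elim (fun _ : Unit => Sum.inl true) (fun i : {x // x ∈ s} => Sum.inr i.val))
        (Sum.elim (fun _ : Unit => Sum.inl true) (fun i : {x // x ∈ s} => Sum.inr i.val))) ∧
    -- corank A(G̃(s ∪ {v,w})) = corank A(G̃(s ∪ {v})) + 1
    corankZ ((ext2 A a (1 : ZMod 2)).submatrix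
        (Sum.elim (Sum.inl : Bool → Bool ⊕ Fin n) (fun i : {x // x ∈ s} => Sum.inr i.val))
        (Sum.elim (Sum.inl : Bool → Bool ⊕ Fin n) (fun i : {x // x ∈ s} => Sum.inr i.val)))
      = corankZ ((ext2 A a (1 : ZMod 2)).submatrix
        (Sum.elim (fun _ : Unit => Sum.inl false) (fun i : {x // x ∈ s} => Sum.inr i.val))
        (Sum.elim (fun _ : Unit => Sum.inl false) (fun i : {x // x ∈ s} => Sum.inr i.val))) + 1 := by

  classical
  set f : Bool ⊕ {x // x ∈ s} → Unit ⊕ {x // x ∈ s} := Sum.map (fun _ => ()) id with hf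
  set g : Unit ⊕ {x // x ∈ s} → Bool ⊕ {x // x ∈ s} := Sum.map (fun _ => false) id with hg
  set N : Matrix (Unit ⊕ {x // x ∈ s}) (Unit ⊕ {x // x ∈ s}) (ZMod 2) :=
    (ext2 A a (1 : ZMod 2)).submatrix
      (Sum.elim (fun _ : Unit => Sum.inl false) (fun i : {x // x ∈ s} => Sum.inr i.val))
      (Sum.elim (fun _ : Unit => Sum.inl false) (fun i : {x // x ∈ s} => Sum.inr i.val)) with hN
  refine ⟨?_, ?_, ?_⟩
  · have h : (ext2 A a (1 : ZMod 2)).submatrix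
        (fun i : {x // x ∈ s} => Sum.inr i.val) (fun i : {x // x ∈ s} => Sum.inr i.val)
        = A.submatrix (fun i : {x // x ∈ s} => i.val) (fun i : {x // x ∈ s} => i.val) := by
      ext i j; rfl
    rw [h]
  · have h : (ext2 A a (1 : ZMod 2)).submatrix
        (Sum.elim (fun _ : Unit => Sum.inl false) (fun i : {x // x ∈ s} => Sum.inr i.val))
        (Sum.elim (fun _ : Unit => Sum.inl false) (fun i : {x // x ∈ s} => Sum.inr i.val))
        = (ext2 A a (1 : ZMod 2)).submatrix
        (Sum.elim (fun _ : Unit => Sum.inl true) (fun i : {x // x ∈ s} => Sum.inr i.val))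
        (Sum.elim (fun _ : Unit => Sum.inl true) (fun i : {x // x ∈ s} => Sum.inr i.val)) := by
      ext i j
      rcases i with i | i <;> rcases j with j | j <;> rfl
    exact congrArg corankZ h
  · have hMN : (ext2 A a (1 : ZMod 2)).submatrix
        (Sum.elim (Sum.inl : Bool → Bool ⊕ Fin n) (fun i : {x // x ∈ s} => Sum.inr i.val))
        (Sum.elim (Sum.inl : Bool → Bool ⊕ Fin n) (fun i : {x // x ∈ s} => Sum.inr i.val))
        = N.submatrix f f := by
      ext i j
      rcases i with i | i <;> rcases j with j | j <;> rfl
    have hNM : N = (N.submatrix f f).submatrix g g := by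
      ext i j
      rcases i with i | i <;> rcases j with j | j <;> rfl
    have hle1 : (N.submatrix f f).rank ≤ N.rank := rank_submatrix_le' N f f
    have hle2 : N.rank ≤ (N.submatrix f f).rank := by
      nth_rewrite 1 [hNM]; exact rank_submatrix_le' _ g g
    have hrank : (N.submatrix f f).rank = N.rank := le_antisymm hle1 hle2
    rw [hMN]
    simp only [corankZ, hrank, Fintype.card_sum, Fintype.card_bool, Fintype.card_unit]
    push_cast
    ring
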